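/- Fix $q$ with $1 < q < \frac{7}{3}$. The function $h(s) = (4-s)\,s\,B\!\left(\frac{s}{7-3q} + \frac12, \frac12\right)$ is strictly increasing on $(0, q-1)$. -/

import Mathlib

open MeasureTheory Set intervalIntegral

noncomputable def betaReal (x y : ℝ) : ℝ :=
  ∫ t in (0:ℝ)..1, t ^ (x - 1) * (1 - t) ^ (y - 1)

-- L1: beta-type integrability
lemma betaInt {a b : ℝ} (ha : -1 < a) (hb : -1 < b) :
    IntervalIntegrable (fun t : ℝ => t ^ a * (1 - t) ^ b) volume 0 1 := by
  have h1 : IntervalIntegrable (fun t : ℝ => t ^ a * (1 - t) ^ b) volume 0 (1/2) := by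
    apply (intervalIntegrable_rpow' ha).mul_continuousOn
    apply ContinuousOn.rpow_const
    · exact (continuous_const.sub continuous_id).continuousOn
    · intro t ht
      rw [uIcc_of_le (by norm_num)] at ht
      left
      have := ht.2
      intro h; rw [sub_eq_zero] at h; nlinarith [ht.2]
  have h2 : IntervalIntegrable (fun t : ℝ => t ^ a * (1 - t) ^ b) volume (1/2) 1 := by
    have base : IntervalIntegrable (fun t : ℝ => t ^ b) volume 0 (1/2) :=
      intervalIntegrable_rpow' hb
    have comp : IntervalIntegrable (fun t : ℝ => (1 - t) ^ b) volume (1/2) 1 := by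
      have := base.comp_sub_left 1
      norm_num at this
      exact this.symm
    apply comp.continuousOn_mul (g := fun t : ℝ => t ^ a)
    apply ContinuousOn.rpow_const continuous_id.continuousOn
    intro t ht
    rw [uIcc_of_le (by norm_num)] at ht
    left; simp only [id_eq]; intro h; rw [h] at ht; norm_num at ht
  exact h1.trans h2

lemma betaIntOn {a b : ℝ} (ha : -1 < a) (hb : -1 < b) :
    IntegrableOn (fun t : ℝ => t ^ a * (1 - t) ^ b) (Ioo 0 1) volume :=
  (intervalIntegrable_iff_integrableOn_Ioo_of_le zero_le_one).mp (betaInt ha hb)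

-- L2 : crude log bound
lemma neg_log_le {t ε : ℝ} (ht0 : 0 < t) (hε : 0 < ε) :
    -Real.log t ≤ t ^ (-ε) / ε := by
  have h1 : Real.log (t ^ (-ε)) = -ε * Real.log t := Real.log_rpow ht0 _
  have h2 : Real.log (t ^ (-ε)) ≤ t ^ (-ε) - 1 :=
    Real.log_le_sub_one_of_pos (Real.rpow_pos_of_pos ht0 _)
  have h3 : (0:ℝ) < t ^ (-ε) := Real.rpow_pos_of_pos ht0 _
  rw [h1] at h2
  rw [le_div_iff₀ hε]
  nlinarith

-- L4 sub : 2 log v ≤ v - 1/v for v ≥ 1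
lemma two_log_le {v : ℝ} (hv : 1 ≤ v) : 2 * Real.log v ≤ v - 1/v := by
  have hmono : MonotoneOn (fun v : ℝ => v - 1/v - 2 * Real.log v) (Ici 1) := by
    apply monotoneOn_of_deriv_nonneg (convex_Ici 1)
    · apply ContinuousOn.sub (ContinuousOn.sub continuousOn_id ?_) ?_
      · exact continuousOn_const.div continuousOn_id (fun x hx => by
          intro h; rw [h] at hx; simp at hx; linarith)
      · exact (Real.continuousOn_log.mono (fun x hx => by
          simp only [mem_compl_iff, mem_singleton_iff]
          intro h; rw [h] at hx; simp at hx; linarith)).const_smul 2 |>.congr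
          (fun x hx => by simp [smul_eq_mul])
    · intro x hx
      rw [interior_Ici] at hx
      have hx0 : (0:ℝ) < x := lt_trans one_pos hx
      have : HasDerivAt (fun v : ℝ => v - 1/v - 2 * Real.log v)
          (1 - (-(1/x^2)) - 2 * x⁻¹) x := by
        have h1 : HasDerivAt (fun v : ℝ => 1/v) (-(1/x^2)) x := by
          simpa using (hasDerivAt_inv (ne_of_gt hx0))
        exact ((hasDerivAt_id x).sub h1).sub ((Real.hasDerivAt_log (ne_of_gt hx0)).const_mul 2)
      apply DifferentiableAt.differentiableWithinAt this.differentiableAt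
    · intro x hx
      rw [interior_Ici] at hx
      have hx0 : (0:ℝ) < x := lt_trans one_pos hx
      have h1 : HasDerivAt (fun v : ℝ => 1/v) (-(1/x^2)) x := by
        simpa using (hasDerivAt_inv (ne_of_gt hx0))
      have hD : HasDerivAt (fun v : ℝ => v - 1/v - 2 * Real.log v)
          (1 - (-(1/x^2)) - 2 * x⁻¹) x :=
        ((hasDerivAt_id x).sub h1).sub ((Real.hasDerivAt_log (ne_of_gt hx0)).const_mul 2)
      rw [hD.deriv]
      have : 1 - (-(1/x^2)) - 2 * x⁻¹ = (1 - x⁻¹)^2 := by field_simp; ring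
      rw [this]; positivity
  have := hmono (self_mem_Ici) (show v ∈ Ici 1 from hv) hv
  simp only [Real.log_one] at this
  rw [one_div] at this ⊢
  norm_num at this
  linarith

-- the sharp pointwise log inequality
lemma neg_log_le_sharp {t : ℝ} (ht0 : 0 < t) (ht1 : t < 1) :
    -Real.log t ≤ t ^ (-(1/2):ℝ) - t ^ ((1/2):ℝ) := by
  set v := t ^ (-(1/2):ℝ) with hv
  have hv1 : 1 ≤ v := by
    rw [hv]
    apply Real.one_le_rpow_of_pos_of_le_one_of_nonpos ht0 (le_of_lt ht1) (by norm_num)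
  have hlog : Real.log v = -(1/2) * Real.log t := Real.log_rpow ht0 _
  have hinv : 1 / v = t ^ ((1/2):ℝ) := by
    rw [hv, one_div, ← Real.rpow_neg (le_of_lt ht0), neg_neg]
  have := two_log_le hv1
  rw [hlog, hinv] at this
  linarith

lemma betaReal_half (x : ℝ) :
    betaReal x (1/2) = ∫ t in Ioo (0:ℝ) 1, t ^ (x-1) * (1-t) ^ (-(1/2):ℝ) := by
  rw [betaReal, intervalIntegral.integral_of_le zero_le_one,
    MeasureTheory.integral_Ioc_eq_integral_Ioo]
  norm_num

lemma logIntegrableOn {x : ℝ} (hx : 0 < x) :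
    IntegrableOn (fun t : ℝ => Real.log t * (t ^ (x-1) * (1-t) ^ (-(1/2):ℝ)))
      (Ioo 0 1) volume := by
  have hmeas : AEStronglyMeasurable
      (fun t : ℝ => Real.log t * (t ^ (x-1) * (1-t) ^ (-(1/2):ℝ)))
      (volume.restrict (Ioo 0 1)) := by
    apply ContinuousOn.aestronglyMeasurable _ measurableSet_Ioo
    apply ContinuousOn.mul
    · exact Real.continuousOn_log.mono (fun t ht => by
        simp only [mem_compl_iff, mem_singleton_iff]
        exact ne_of_gt ht.1)
    · apply ContinuousOn.mul
      · exact ContinuousOn.rpow_const continuousOn_id (fun t ht => Or.inl (ne_of_gt ht.1))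
      · exact ContinuousOn.rpow_const (continuous_const.sub continuous_id).continuousOn
          (fun t ht => Or.inl (by intro h; rw [sub_eq_zero] at h; linarith [ht.2]))
  have hbound : IntegrableOn
      (fun t : ℝ => (2/x) * (t ^ (x/2-1) * (1-t) ^ (-(1/2):ℝ))) (Ioo 0 1) volume :=
    (betaIntOn (by linarith) (by norm_num)).const_mul _
  apply Integrable.mono hbound hmeas
  rw [ae_restrict_iff' measurableSet_Ioo]
  filter_upwards with t ht
  have ht0 := ht.1; have ht1 := ht.2
  have hpos1 : (0:ℝ) < t ^ (x-1) := Real.rpow_pos_of_pos ht0 _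
  have hpos2 : (0:ℝ) < (1-t) ^ (-(1/2):ℝ) := Real.rpow_pos_of_pos (by linarith) _
  rw [Real.norm_eq_abs, Real.norm_eq_abs, abs_mul, abs_of_pos (mul_pos hpos1 hpos2)]
  have hlog : |Real.log t| = -Real.log t := by
    rw [abs_of_nonpos (Real.log_nonpos (le_of_lt ht0) (le_of_lt ht1))]
  rw [hlog]
  have h1 : -Real.log t ≤ t ^ (-(x/2)) / (x/2) := neg_log_le ht0 (by linarith)
  have habs : (2/x) * (t ^ (x/2-1) * (1-t) ^ (-(1/2):ℝ)) =
      |(2/x) * (t ^ (x/2-1) * (1-t) ^ (-(1/2):ℝ))| := by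
    rw [abs_of_pos]
    positivity
  rw [← habs]
  have key : (t ^ (-(x/2)) / (x/2)) * (t ^ (x-1) * (1-t) ^ (-(1/2):ℝ)) =
      (2/x) * (t ^ (x/2-1) * (1-t) ^ (-(1/2):ℝ)) := by
    have hmul : t ^ (-(x/2)) * t ^ (x-1) = t ^ (x/2-1) := by
      rw [← Real.rpow_add ht0]; congr 1; ring
    set A := t ^ (-(x/2))
    set B := t ^ (x-1)
    set E := t ^ (x/2-1)
    set C := (1-t) ^ (-(1/2):ℝ)
    have hx' : x ≠ 0 := ne_of_gt hx
    rw [← hmul, div_div_eq_mul_div]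
    ring
  calc -Real.log t * (t ^ (x-1) * (1-t) ^ (-(1/2):ℝ))
      ≤ (t ^ (-(x/2)) / (x/2)) * (t ^ (x-1) * (1-t) ^ (-(1/2):ℝ)) := by
        apply mul_le_mul_of_nonneg_right h1 (le_of_lt (mul_pos hpos1 hpos2))
    _ = (2/x) * (t ^ (x/2-1) * (1-t) ^ (-(1/2):ℝ)) := key

lemma contOnBeta (a b : ℝ) : ContinuousOn (fun t : ℝ => t ^ a * (1-t) ^ b) (Ioo 0 1) := by
  apply ContinuousOn.mul
  · exact ContinuousOn.rpow_const continuousOn_id (fun t ht => Or.inl (ne_of_gt ht.1))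
  · exact ContinuousOn.rpow_const (continuous_const.sub continuous_id).continuousOn
      (fun t ht => Or.inl (by intro h; rw [sub_eq_zero] at h; linarith [ht.2]))

lemma hasDerivAt_betaHalf {x : ℝ} (hx : 0 < x) :
    HasDerivAt (fun y : ℝ => betaReal y (1/2))
      (∫ t in Ioo (0:ℝ) 1, Real.log t * (t ^ (x-1) * (1-t) ^ (-(1/2):ℝ))) x := by
  have key := _root_.hasDerivAt_integral_of_dominated_loc_of_deriv_le
    (μ := volume.restrict (Ioo (0:ℝ) 1))
    (F := fun (y : ℝ) (t : ℝ) => t ^ (y-1) * (1-t) ^ (-(1/2):ℝ))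
    (F' := fun (y : ℝ) (t : ℝ) => Real.log t * (t ^ (y-1) * (1-t) ^ (-(1/2):ℝ)))
    (x₀ := x)
    (bound := fun t : ℝ => (4/x) * (t ^ (x/4-1) * (1-t) ^ (-(1/2):ℝ)))
    (Metric.ball_mem_nhds x (half_pos hx))
    (Filter.Eventually.of_forall fun y =>
      (contOnBeta (y-1) _).aestronglyMeasurable measurableSet_Ioo)
    (betaIntOn (by linarith) (by norm_num))
    (logIntegrableOn hx).aestronglyMeasurable
    ?_ ((betaIntOn (by linarith) (by norm_num)).const_mul _) ?_
  · have heq : (fun y : ℝ => ∫ t, t ^ (y-1) * (1-t) ^ (-(1/2):ℝ) ∂(volume.restrict (Ioo 0 1)))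
        = fun y : ℝ => betaReal y (1/2) := by
      funext y; rw [betaReal_half]
    rw [← heq]
    exact key.2
  · rw [ae_restrict_iff' measurableSet_Ioo]
    filter_upwards with t ht y hy
    have ht0 := ht.1; have ht1 := ht.2
    rw [Metric.mem_ball, Real.dist_eq, abs_lt] at hy
    have hy2 : x/2 - 1 ≤ y - 1 := by linarith [hy.1]
    have hC : (0:ℝ) < (1-t) ^ (-(1/2):ℝ) := Real.rpow_pos_of_pos (by linarith) _
    have hty : (0:ℝ) < t ^ (y-1) := Real.rpow_pos_of_pos ht0 _
    have hnl : 0 ≤ -Real.log t := by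
      simp only [neg_nonneg]
      exact Real.log_nonpos (le_of_lt ht0) (le_of_lt ht1)
    rw [Real.norm_eq_abs, abs_mul, abs_mul,
      abs_of_pos hty, abs_of_pos hC,
      abs_of_nonpos (Real.log_nonpos (le_of_lt ht0) (le_of_lt ht1))]
    have step1 : t ^ (y-1) ≤ t ^ (x/2-1) :=
      Real.rpow_le_rpow_of_exponent_ge ht0 (le_of_lt ht1) hy2
    have step2 : -Real.log t ≤ t ^ (-(x/4)) / (x/4) := neg_log_le ht0 (by linarith)
    have hx2 : (0:ℝ) < t ^ (x/2-1) := Real.rpow_pos_of_pos ht0 _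
    calc -Real.log t * (t ^ (y-1) * (1-t) ^ (-(1/2):ℝ))
        ≤ -Real.log t * (t ^ (x/2-1) * (1-t) ^ (-(1/2):ℝ)) := by
          apply mul_le_mul_of_nonneg_left _ hnl
          exact mul_le_mul_of_nonneg_right step1 (le_of_lt hC)
      _ ≤ (t ^ (-(x/4)) / (x/4)) * (t ^ (x/2-1) * (1-t) ^ (-(1/2):ℝ)) :=
          mul_le_mul_of_nonneg_right step2 (le_of_lt (mul_pos hx2 hC))
      _ = (4/x) * (t ^ (x/4-1) * (1-t) ^ (-(1/2):ℝ)) := by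
          have hmul : t ^ (-(x/4)) * t ^ (x/2-1) = t ^ (x/4-1) := by
            rw [← Real.rpow_add ht0]; congr 1; ring
          set A := t ^ (-(x/4))
          set B := t ^ (x/2-1)
          set E := t ^ (x/4-1)
          set C := (1-t) ^ (-(1/2):ℝ)
          have hx' : x ≠ 0 := ne_of_gt hx
          rw [← hmul, div_div_eq_mul_div]
          ring
  · rw [ae_restrict_iff' measurableSet_Ioo]
    filter_upwards with t ht y _
    have ht0 := ht.1
    have h1 : HasDerivAt (fun y : ℝ => t ^ (y-1))
        (t ^ (y-1) * Real.log t) y := by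
      have houter := (Real.hasStrictDerivAt_const_rpow ht0 (y-1)).hasDerivAt
      have hinner : HasDerivAt (fun y : ℝ => y - 1) 1 y := (hasDerivAt_id y).sub_const 1
      have : HasDerivAt (fun y : ℝ => t ^ (y-1)) (t ^ (y-1) * Real.log t * 1) y :=
        houter.comp y hinner
      simpa using this
    have : HasDerivAt (fun y : ℝ => t ^ (y-1) * (1-t) ^ (-(1/2):ℝ)) _ y :=
      h1.mul_const ((1-t) ^ (-(1/2):ℝ))
    refine this.congr_deriv ?_
    ring

lemma ibp {b : ℝ} (hb : 0 < b) :
    ∫ t in Ioo (0:ℝ) 1, t ^ (b-1) * (1-t) ^ ((1/2):ℝ) =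
      (1/(2*b)) * ∫ t in Ioo (0:ℝ) 1, t ^ b * (1-t) ^ (-(1/2):ℝ) := by
  have hint1 : IntervalIntegrable (fun t : ℝ => t ^ (b-1) * (1-t) ^ ((1/2):ℝ)) volume 0 1 :=
    betaInt (by linarith) (by norm_num)
  have hint2 : IntervalIntegrable (fun t : ℝ => t ^ b * (1-t) ^ (-(1/2):ℝ)) volume 0 1 :=
    betaInt (by linarith) (by norm_num)
  have hftc : (∫ t in (0:ℝ)..1,
      (b * (t ^ (b-1) * (1-t) ^ ((1/2):ℝ)) - (1/2) * (t ^ b * (1-t) ^ (-(1/2):ℝ)))) = 0 - 0 := by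
    apply intervalIntegral.integral_eq_sub_of_hasDerivAt_of_tendsto
      (f := fun t : ℝ => t ^ b * (1-t) ^ ((1/2):ℝ)) one_pos
    · intro t ht
      have ht0 := ht.1; have ht1 := ht.2
      have h1 : HasDerivAt (fun t : ℝ => t ^ b) (b * t ^ (b-1)) t :=
        Real.hasDerivAt_rpow_const (Or.inl (ne_of_gt ht0))
      have h2 : HasDerivAt (fun t : ℝ => (1-t) ^ ((1/2):ℝ))
          (((1/2) * (1-t) ^ ((1/2:ℝ)-1)) * (-1)) t := by
        have houter : HasDerivAt (fun y : ℝ => y ^ ((1/2):ℝ))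
            ((1/2) * (1-t) ^ ((1/2:ℝ)-1)) (1-t) :=
          Real.hasDerivAt_rpow_const (Or.inl (by intro h; rw [sub_eq_zero] at h; linarith))
        exact houter.comp t ((hasDerivAt_id t).const_sub 1)
      have : HasDerivAt (fun t : ℝ => t ^ b * (1-t) ^ ((1/2):ℝ)) _ t := h1.mul h2
      refine this.congr_deriv ?_
      have : ((1/2:ℝ)-1) = -(1/2) := by norm_num
      rw [this]
      ring
    · exact (hint1.const_mul b).sub (hint2.const_mul (1/2))
    · have : Filter.Tendsto (fun t : ℝ => t ^ b * (1-t) ^ ((1/2):ℝ)) (nhds 0) (nhds 0) := by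
        have h1 : Filter.Tendsto (fun t : ℝ => t ^ b) (nhds 0) (nhds 0) := by
          have := (Real.continuousAt_rpow_const 0 b (Or.inr hb.le)).tendsto
          rwa [Real.zero_rpow (ne_of_gt hb)] at this
        have h2 : Filter.Tendsto (fun t : ℝ => (1-t) ^ ((1/2):ℝ)) (nhds 0) (nhds 1) := by
          have hc : ContinuousAt (fun t : ℝ => (1-t) ^ ((1/2):ℝ)) 0 := by
            apply ContinuousAt.rpow_const
            · exact (continuous_const.sub continuous_id).continuousAt
            · norm_num
          have := hc.tendsto
          norm_num at this
          exact this
        have := h1.mul h2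
        norm_num at this
        exact this
      exact this.mono_left nhdsWithin_le_nhds
    · have : Filter.Tendsto (fun t : ℝ => t ^ b * (1-t) ^ ((1/2):ℝ)) (nhds 1) (nhds 0) := by
        have h1 : Filter.Tendsto (fun t : ℝ => t ^ b) (nhds 1) (nhds 1) := by
          have hc : ContinuousAt (fun t : ℝ => t ^ b) 1 :=
            Real.continuousAt_rpow_const 1 b (Or.inl one_ne_zero)
          have := hc.tendsto
          rwa [Real.one_rpow] at this
        have h2 : Filter.Tendsto (fun t : ℝ => (1-t) ^ ((1/2):ℝ)) (nhds 1) (nhds 0) := by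
          have hc : ContinuousAt (fun t : ℝ => (1-t) ^ ((1/2):ℝ)) 1 := by
            apply ContinuousAt.rpow_const
            · exact (continuous_const.sub continuous_id).continuousAt
            · right; norm_num
          have := hc.tendsto
          norm_num at this
          exact this
        have := h1.mul h2
        norm_num at this
        exact this
      exact this.mono_left nhdsWithin_le_nhds
  rw [intervalIntegral.integral_sub (hint1.const_mul b) (hint2.const_mul (1/2)),
    intervalIntegral.integral_const_mul, intervalIntegral.integral_const_mul] at hftc
  have e1 : (∫ t in (0:ℝ)..1, t ^ (b-1) * (1-t) ^ ((1/2):ℝ))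
      = ∫ t in Ioo (0:ℝ) 1, t ^ (b-1) * (1-t) ^ ((1/2):ℝ) := by
    rw [intervalIntegral.integral_of_le zero_le_one, MeasureTheory.integral_Ioc_eq_integral_Ioo]
  have e2 : (∫ t in (0:ℝ)..1, t ^ b * (1-t) ^ (-(1/2):ℝ))
      = ∫ t in Ioo (0:ℝ) 1, t ^ b * (1-t) ^ (-(1/2):ℝ) := by
    rw [intervalIntegral.integral_of_le zero_le_one, MeasureTheory.integral_Ioc_eq_integral_Ioo]
  rw [e1, e2] at hftc
  have hb' : (2:ℝ) * b ≠ 0 := by positivity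
  field_simp
  linarith [hftc]

lemma betaRealPos {x : ℝ} (hx : 0 < x) : 0 < betaReal x (1/2) := by
  rw [betaReal]
  apply intervalIntegral.intervalIntegral_pos_of_pos_on (betaInt (by linarith) (by norm_num))
  · intro t ht
    exact mul_pos (Real.rpow_pos_of_pos ht.1 _) (Real.rpow_pos_of_pos (by linarith [ht.2]) _)
  · exact one_pos

lemma D_ge {b : ℝ} (hb : 0 < b) :
    -((1/(2*b)) * betaReal (b+1/2) (1/2)) ≤
      ∫ t in Ioo (0:ℝ) 1, Real.log t * (t ^ (b+1/2-1) * (1-t) ^ (-(1/2):ℝ)) := by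
  have hx : (0:ℝ) < b + 1/2 := by linarith
  have stepA : (∫ t in Ioo (0:ℝ) 1, -(Real.log t * (t ^ (b+1/2-1) * (1-t) ^ (-(1/2):ℝ))))
      ≤ ∫ t in Ioo (0:ℝ) 1, t ^ (b-1) * (1-t) ^ ((1/2):ℝ) := by
    apply MeasureTheory.setIntegral_mono_on
    · exact ((show IntegrableOn (fun t : ℝ => Real.log t * (t ^ ((b+1/2)-1) * (1-t) ^ (-(1/2):ℝ)))
        (Ioo 0 1) volume from logIntegrableOn hx)).neg
    · exact betaIntOn (by linarith) (by norm_num)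
    · exact measurableSet_Ioo
    · intro t ht
      have ht0 := ht.1; have ht1 := ht.2
      have h1t : (0:ℝ) < 1 - t := by linarith
      have hP : (0:ℝ) ≤ t ^ (b+1/2-1) * (1-t) ^ (-(1/2):ℝ) :=
        le_of_lt (mul_pos (Real.rpow_pos_of_pos ht0 _) (Real.rpow_pos_of_pos h1t _))
      have hsharp := neg_log_le_sharp ht0 ht1
      have m1 : t ^ (-(1/2):ℝ) * t ^ (b+1/2-1) = t ^ (b-1) := by
        rw [← Real.rpow_add ht0]; congr 1; ring
      have m2 : t ^ ((1/2):ℝ) * t ^ (b+1/2-1) = t ^ b := by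
        rw [← Real.rpow_add ht0]; congr 1; ring
      have m3 : (1-t) * (1-t) ^ (-(1/2):ℝ) = (1-t) ^ ((1/2):ℝ) := by
        nth_rewrite 1 [← Real.rpow_one (1-t)]
        rw [← Real.rpow_add h1t]; congr 1; ring
      have m4 : t ^ (b-1) * t = t ^ b := by
        rw [← Real.rpow_add_one (ne_of_gt ht0)]; congr 1; ring
      have e : (t ^ (-(1/2):ℝ) - t ^ ((1/2):ℝ)) * (t ^ (b+1/2-1) * (1-t) ^ (-(1/2):ℝ))
          = t ^ (b-1) * (1-t) ^ ((1/2):ℝ) := by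
        linear_combination ((1-t) ^ (-(1/2):ℝ)) * m1 - ((1-t) ^ (-(1/2):ℝ)) * m2
          + (t ^ (b-1)) * m3 + ((1-t) ^ (-(1/2):ℝ)) * m4
      calc -(Real.log t * (t ^ (b+1/2-1) * (1-t) ^ (-(1/2):ℝ)))
          = (-Real.log t) * (t ^ (b+1/2-1) * (1-t) ^ (-(1/2):ℝ)) := by ring
        _ ≤ (t ^ (-(1/2):ℝ) - t ^ ((1/2):ℝ)) * (t ^ (b+1/2-1) * (1-t) ^ (-(1/2):ℝ)) :=
            mul_le_mul_of_nonneg_right hsharp hP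
        _ = t ^ (b-1) * (1-t) ^ ((1/2):ℝ) := e
  rw [MeasureTheory.integral_neg] at stepA
  rw [ibp hb] at stepA
  have stepC : (∫ t in Ioo (0:ℝ) 1, t ^ b * (1-t) ^ (-(1/2):ℝ))
      ≤ ∫ t in Ioo (0:ℝ) 1, t ^ (b+1/2-1) * (1-t) ^ (-(1/2):ℝ) := by
    apply MeasureTheory.setIntegral_mono_on
    · exact betaIntOn (by linarith) (by norm_num)
    · exact betaIntOn (by linarith) (by norm_num)
    · exact measurableSet_Ioo
    · intro t ht
      apply mul_le_mul_of_nonneg_right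
        (Real.rpow_le_rpow_of_exponent_ge ht.1 (le_of_lt ht.2) (by linarith))
        (le_of_lt (Real.rpow_pos_of_pos (by linarith [ht.2]) _))
  rw [betaReal_half]
  have hpos : (0:ℝ) ≤ 1/(2*b) := by positivity
  have := mul_le_mul_of_nonneg_left stepC hpos
  linarith

theorem h_strict_mono (q : ℝ) (hq : 1 < q) (hq73 : q < 7/3) :
    StrictMonoOn (fun s : ℝ => (4 - s) * s * betaReal (s / (7 - 3*q) + 1/2) (1/2))
      (Ioo (0:ℝ) (q - 1)) := by
  have hc : (0:ℝ) < 7 - 3*q := by linarith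
  set c := 7 - 3*q with hcdef
  have hder : ∀ s ∈ Ioo (0:ℝ) (q-1),
      HasDerivAt (fun s : ℝ => (4 - s) * s * betaReal (s / c + 1/2) (1/2))
        ((4 - 2*s) * betaReal (s/c + 1/2) (1/2)
          + (4 - s) * s * ((∫ t in Ioo (0:ℝ) 1,
              Real.log t * (t ^ (s/c + 1/2 - 1) * (1-t) ^ (-(1/2):ℝ))) * (1/c))) s := by
    intro s hs
    have hs0 := hs.1
    have hx : (0:ℝ) < s/c + 1/2 := by positivity
    have hB := hasDerivAt_betaHalf hx
    have hl : HasDerivAt (fun s : ℝ => s/c + 1/2) (1/c) s := by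
      simpa using ((hasDerivAt_id s).div_const c).add_const (1/2)
    have hBs : HasDerivAt (fun s : ℝ => betaReal (s/c + 1/2) (1/2))
        ((∫ t in Ioo (0:ℝ) 1,
          Real.log t * (t ^ (s/c + 1/2 - 1) * (1-t) ^ (-(1/2):ℝ))) * (1/c)) s :=
      HasDerivAt.comp (h := fun s : ℝ => s/c + 1/2) s hB hl
    have hpoly : HasDerivAt (fun s : ℝ => (4 - s) * s) (4 - 2*s) s := by
      have : HasDerivAt (fun s : ℝ => (4 - s) * s) _ s :=
        ((hasDerivAt_id s).const_sub 4).mul (hasDerivAt_id s)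
      convert this using 1
      simp only [id_eq]
      ring
    have : HasDerivAt
      (fun s : ℝ => (4 - s) * s * betaReal (s / c + 1/2) (1/2)) _ s := hpoly.mul hBs
    convert this using 1
  apply strictMonoOn_of_deriv_pos (convex_Ioo 0 (q-1))
  · intro s hs
    exact (hder s hs).continuousAt.continuousWithinAt
  · intro s hs
    rw [interior_Ioo] at hs
    rw [(hder s hs).deriv]
    have hs0 := hs.1
    have hs1 := hs.2
    have hs43 : s < 4/3 := by linarith
    have hs4 : s < 4 := by linarith
    have hx : (0:ℝ) < s/c + 1/2 := by positivity
    have hb0 : (0:ℝ) < s/c := div_pos hs0 hc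
    have hBpos := betaRealPos hx
    have hDB := D_ge hb0
    set B := betaReal (s/c + 1/2) (1/2) with hBdef
    set Dv := ∫ t in Ioo (0:ℝ) 1,
      Real.log t * (t ^ (s/c + 1/2 - 1) * (1-t) ^ (-(1/2):ℝ)) with hDdef
    have h1 : -((1/(2*(s/c))) * B) * (1/c) ≤ Dv * (1/c) :=
      mul_le_mul_of_nonneg_right hDB (by positivity)
    have h2 : (4 - s) * s * (-((1/(2*(s/c))) * B) * (1/c)) ≤ (4 - s) * s * (Dv * (1/c)) := by
      apply mul_le_mul_of_nonneg_left h1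
      nlinarith
    have h3 : (4 - s) * s * (-((1/(2*(s/c))) * B) * (1/c)) = -((4 - s) * B / 2) := by
      have hsne : s ≠ 0 := ne_of_gt hs0
      have hcne : c ≠ 0 := ne_of_gt hc
      field_simp
    rw [h3] at h2
    nlinarith [mul_pos (show (0:ℝ) < 2 - 3/2 * s by linarith) hBpos]
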